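/- arXiv:2106.13853 — 2 statements merged into one kernel-verified Lean document; each statement's English description precedes it below -/
import Mathlib

section
/- Let f : E → ℝ be differentiable, μ-strongly convex and L-smooth on X, let x* be a minimizer of f over X, let y ∈ X, and let α ≥ L. Let z = Proj_X(y − (1/α)∇f(y)) be the exact projected gradient step (equivalently, z is the minimizer over X of x ↦ ⟨∇f(y), x − y⟩ + (α/2)‖x − y‖²). Then ‖z − x*‖² ≤ ((α − μ)/(α + μ))‖y − x*‖². -/
open scoped RealInnerProductSpace

private theorem aux_lim (c d : ℝ) (h : ∀ t : ℝ, 0 < t → t ≤ 1 → c * t ≤ d * t ^ 2) :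
    c ≤ 0 := by
  by_contra hc
  push_neg at hc
  set D : ℝ := max d 1 with hDdef
  have hD1 : (1:ℝ) ≤ D := le_max_right _ _
  have hdD : d ≤ D := le_max_left _ _
  have hD0 : 0 < D := lt_of_lt_of_le one_pos hD1
  set t : ℝ := min 1 (c / (2 * D)) with htdef
  have ht0 : 0 < t := lt_min one_pos (div_pos hc (by positivity))
  have ht1 : t ≤ 1 := min_le_left _ _
  have htc : t ≤ c / (2 * D) := min_le_right _ _
  have h1 := h t ht0 ht1
  have h2 : d * t ^ 2 ≤ D * t ^ 2 := by nlinarith [sq_nonneg t]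
  have h3 : D * t ≤ c / 2 := by
    calc D * t ≤ D * (c / (2 * D)) := by nlinarith
      _ = c / 2 := by field_simp
  nlinarith

/-- Exact projected gradient step contraction (Mokhtari et al. / Zhang et al.):
if `z = Proj_X(y − (1/α)∇f(y))`, then `‖z − x*‖² ≤ ((α − μ)/(α + μ))‖y − x*‖²`.
The metric projection is characterized as the nearest point of `X`. -/
theorem stmt_4
    {E : Type*} [NormedAddCommGroup E] [InnerProductSpace ℝ E] [FiniteDimensional ℝ E]
    (X : Set E) (hXne : X.Nonempty) (hXcp : IsCompact X) (hXconv : Convex ℝ X)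
    (f : E → ℝ) (hf : Differentiable ℝ f)
    (μ L : ℝ) (hμ : 0 < μ) (hL : 0 < L)
    (hsc : ∀ a ∈ X, ∀ b ∈ X,
      f a + ⟪gradient f a, b - a⟫ + μ / 2 * ‖b - a‖ ^ 2 ≤ f b)
    (hsm : ∀ a ∈ X, ∀ b ∈ X,
      f b ≤ f a + ⟪gradient f a, b - a⟫ + L / 2 * ‖b - a‖ ^ 2)
    (xs : E) (hxsX : xs ∈ X) (hxs : ∀ x ∈ X, f xs ≤ f x)
    (y : E) (hy : y ∈ X)
    (α : ℝ) (hα : L ≤ α)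
    (z : E) (hzX : z ∈ X)
    (hz : ∀ v ∈ X,
      ‖(y - (1 / α) • gradient f y) - z‖ ≤ ‖(y - (1 / α) • gradient f y) - v‖) :
    ‖z - xs‖ ^ 2 ≤ (α - μ) / (α + μ) * ‖y - xs‖ ^ 2 := by
  have hα0 : 0 < α := lt_of_lt_of_le hL hα
  set g : E := gradient f y with hg
  set p : E := y - (1 / α) • g with hp
  -- membership of convex combinations
  have hmem : ∀ a ∈ X, ∀ b ∈ X, ∀ t : ℝ, 0 < t → t ≤ 1 → a + t • (b - a) ∈ X := by
    intro a ha b hb t ht0 ht1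
    have := hXconv ha hb (by linarith : (0:ℝ) ≤ 1 - t) ht0.le (by ring)
    convert this using 1
    module
  -- first-order optimality of xs
  have hopt : 0 ≤ ⟪gradient f xs, z - xs⟫ := by
    have key : ∀ t : ℝ, 0 < t → t ≤ 1 →
        (-⟪gradient f xs, z - xs⟫) * t ≤ (L / 2 * ‖z - xs‖ ^ 2) * t ^ 2 := by
      intro t ht0 ht1
      have hm := hmem xs hxsX z hzX t ht0 ht1
      have h1 := hsm xs hxsX _ hm
      have h2 := hxs _ hm
      have e1 : (xs + t • (z - xs)) - xs = t • (z - xs) := by abel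
      rw [e1, real_inner_smul_right, norm_smul, Real.norm_eq_abs, mul_pow, sq_abs] at h1
      nlinarith
    linarith [aux_lim _ _ key]
  -- quadratic growth at the minimizer
  have hgrow : f xs + μ / 2 * ‖z - xs‖ ^ 2 ≤ f z := by
    have h1 := hsc xs hxsX z hzX
    linarith
  -- projection variational inequality at xs
  have hproj : α * ⟪y - z, xs - z⟫ ≤ ⟪g, xs - z⟫ := by
    have key : ∀ t : ℝ, 0 < t → t ≤ 1 →
        (2 * ⟪p - z, xs - z⟫) * t ≤ (‖xs - z‖ ^ 2) * t ^ 2 := by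
      intro t ht0 ht1
      have hm := hmem z hzX xs hxsX t ht0 ht1
      have h1 := pow_le_pow_left₀ (norm_nonneg _) (hz _ hm) 2
      have e1 : p - (z + t • (xs - z)) = (p - z) - t • (xs - z) := by abel
      rw [e1] at h1
      have e2 : ‖(p - z) - t • (xs - z)‖ ^ 2
          = ‖p - z‖ ^ 2 - 2 * (t * ⟪p - z, xs - z⟫) + t ^ 2 * ‖xs - z‖ ^ 2 := by
        rw [norm_sub_sq_real, real_inner_smul_right, norm_smul, Real.norm_eq_abs,
          mul_pow, sq_abs]
      nlinarith
    have h0 : ⟪p - z, xs - z⟫ ≤ 0 := by linarith [aux_lim _ _ key]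
    have e2 : ⟪p - z, xs - z⟫ = ⟪y - z, xs - z⟫ - 1 / α * ⟪g, xs - z⟫ := by
      rw [hp]
      have e3 : y - (1 / α) • g - z = (y - z) - (1 / α) • g := by abel
      rw [e3, inner_sub_left, real_inner_smul_left]
    rw [e2] at h0
    have h5 : α * (1 / α * ⟪g, xs - z⟫) = ⟪g, xs - z⟫ := by field_simp
    nlinarith [mul_nonpos_of_nonneg_of_nonpos hα0.le h0, h5]
  -- strong convexity at y evaluated at xs
  have h1 := hsc y hy xs hxsX
  -- smoothness at y evaluated at z
  have h2 := hsm y hy z hzX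
  -- inner product identities
  have e3 : ⟪g, z - y⟫ - ⟪g, xs - y⟫ = - ⟪g, xs - z⟫ := by
    rw [← inner_sub_right, ← inner_neg_right]
    congr 1
    abel
  have e4 : 2 * ⟪y - z, xs - z⟫ = ‖y - z‖ ^ 2 + ‖xs - z‖ ^ 2 - ‖y - xs‖ ^ 2 := by
    have h := @norm_sub_sq_real E _ _ (y - z) (xs - z)
    have e5 : (y - z) - (xs - z) = y - xs := by abel
    rw [e5] at h
    linarith
  have e4' : α * (2 * ⟪y - z, xs - z⟫)
      = α * (‖y - z‖ ^ 2 + ‖xs - z‖ ^ 2 - ‖y - xs‖ ^ 2) := by rw [e4]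
  have e6a : α * ‖z - y‖ ^ 2 = α * ‖y - z‖ ^ 2 := by rw [norm_sub_rev]
  have e7a : μ * ‖xs - y‖ ^ 2 = μ * ‖y - xs‖ ^ 2 := by rw [norm_sub_rev]
  have e8a : α * ‖xs - z‖ ^ 2 = α * ‖z - xs‖ ^ 2 := by rw [norm_sub_rev]
  have hL2 : L / 2 * ‖z - y‖ ^ 2 ≤ α / 2 * ‖z - y‖ ^ 2 := by
    nlinarith [sq_nonneg ‖z - y‖]
  rw [div_mul_eq_mul_div, le_div_iff₀ (by positivity)]
  linarith [h1, h2, hgrow, hproj, e3, e4', e6a, e7a, e8a, hL2]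
end

section
/- In the HiOCO setting with non-zero local delay, if additionally 4η^{J_l+J_r} < 1, then for any ξ > 0 the dynamic regret satisfies: Σ_{t=1}^{T} (f_t(x_t) − f_t(x_t*)) ≤ (1/(2ξ)) Σ_{t=1}^{T} ‖∇f_t(x_t*)‖² + ((L + ξ)/2)·τ·R² + ((L + ξ)/(2(1 − 4η^{J_l+J_r}))) · ( τ·R² + 6τ²·Π₂* + (4β/(1 − η))·Δ₂ ), where τ = τ_l + τ_r is the total delay. -/
open scoped RealInnerProductSpace

private lemma small_pos (c K : ℝ) (hK : 0 ≤ K)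
    (h : ∀ s : ℝ, 0 < s → s ≤ 1 → 0 ≤ c + s * K) : 0 ≤ c := by
  by_contra hc
  push_neg at hc
  have hK1 : (0:ℝ) < K + 1 := by linarith
  have hs1 : (0:ℝ) < -c / (K + 1) := div_pos (by linarith) hK1
  set s := min 1 (-c / (K + 1)) with hs
  have h1 : 0 < s := lt_min one_pos hs1
  have h2 : s ≤ 1 := min_le_left _ _
  have h3 := h s h1 h2
  have h4 : s * K ≤ (-c / (K + 1)) * K :=
    mul_le_mul_of_nonneg_right (min_le_right _ _) hK
  have h5 : c + (-c / (K + 1)) * K < 0 := by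
    have : c + (-c / (K + 1)) * K = c / (K + 1) := by field_simp; ring
    rw [this]
    exact div_neg_of_neg_of_pos hc hK1
  linarith

private lemma proj_vi {E : Type*} [NormedAddCommGroup E] [InnerProductSpace ℝ E]
    {X : Set E} (hX : Convex ℝ X) {w p : E} (hp : p ∈ X)
    (hmin : ∀ v ∈ X, ‖w - p‖ ≤ ‖w - v‖) {v : E} (hv : v ∈ X) :
    ⟪w - p, v - p⟫ ≤ 0 := by
  have key : ∀ s : ℝ, 0 < s → s ≤ 1 →
      0 ≤ -(2 * ⟪w - p, v - p⟫) + s * ‖v - p‖ ^ 2 := by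
    intro s hs0 hs1
    have hmem : p + s • (v - p) ∈ X := by
      have := hX hp hv (by linarith : (0:ℝ) ≤ 1 - s) hs0.le (by ring)
      convert this using 1
      module
    have h1 := hmin _ hmem
    have h2 : ‖w - p‖ ^ 2 ≤ ‖w - (p + s • (v - p))‖ ^ 2 := by
      have := norm_nonneg (w - p)
      nlinarith
    have e1 : w - (p + s • (v - p)) = (w - p) - s • (v - p) := by abel
    have expand : ‖w - (p + s • (v - p))‖ ^ 2
        = ‖w - p‖ ^ 2 - 2 * (s * ⟪w - p, v - p⟫) + s ^ 2 * ‖v - p‖ ^ 2 := by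
      rw [e1, norm_sub_sq_real, real_inner_smul_right, norm_smul]
      simp [Real.norm_eq_abs, mul_pow, sq_abs]
    have h3 : 0 ≤ s * (-(2 * ⟪w - p, v - p⟫) + s * ‖v - p‖ ^ 2) := by
      rw [expand] at h2; nlinarith
    nlinarith
  have := small_pos _ _ (sq_nonneg ‖v - p‖) key
  linarith

private lemma min_vi {E : Type*} [NormedAddCommGroup E] [InnerProductSpace ℝ E]
    {X : Set E} (hX : Convex ℝ X) {h : E → ℝ} {gh : E → E} {xs v : E}
    (hxs : xs ∈ X) (hv : v ∈ X) {L : ℝ} (hL : 0 ≤ L)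
    (hsm : ∀ a ∈ X, ∀ b ∈ X, h b ≤ h a + ⟪gh a, b - a⟫ + L / 2 * ‖b - a‖ ^ 2)
    (hmin : ∀ u ∈ X, h xs ≤ h u) :
    0 ≤ ⟪gh xs, v - xs⟫ := by
  apply small_pos _ (L / 2 * ‖v - xs‖ ^ 2) (by positivity)
  intro s hs0 hs1
  have hmem : xs + s • (v - xs) ∈ X := by
    have := hX hxs hv (by linarith : (0:ℝ) ≤ 1 - s) hs0.le (by ring)
    convert this using 1
    module
  have h1 := hmin _ hmem
  have h2 := hsm xs hxs _ hmem
  have e1 : xs + s • (v - xs) - xs = s • (v - xs) := by abel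
  rw [e1, real_inner_smul_right, norm_smul] at h2
  simp only [Real.norm_eq_abs, mul_pow, sq_abs, abs_of_pos hs0] at h2
  have h3 : 0 ≤ s * (⟪gh xs, v - xs⟫ + s * (L / 2 * ‖v - xs‖ ^ 2)) := by nlinarith
  nlinarith

private lemma step_contract {E : Type*} [NormedAddCommGroup E] [InnerProductSpace ℝ E]
    {X : Set E} (hX : Convex ℝ X) {h : E → ℝ} {gh : E → E} {μ L α γ δ : ℝ}
    (hμ : 0 < μ) (hμL : μ ≤ L) (hLα : L ≤ α) (hγ0 : 0 < γ) (hγ : γ < 2 * μ)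
    (hsc : ∀ a ∈ X, ∀ b ∈ X, h a + ⟪gh a, b - a⟫ + μ / 2 * ‖b - a‖ ^ 2 ≤ h b)
    (hsm : ∀ a ∈ X, ∀ b ∈ X, h b ≤ h a + ⟪gh a, b - a⟫ + L / 2 * ‖b - a‖ ^ 2)
    {xs y p g : E} (hxsX : xs ∈ X) (hyX : y ∈ X) (hpX : p ∈ X)
    (hmin : ∀ u ∈ X, h xs ≤ h u)
    (hg : ‖g - gh y‖ ≤ δ)
    (hproj : ∀ v ∈ X, ‖y - (1 / α) • g - p‖ ≤ ‖y - (1 / α) • g - v‖) :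
    ‖p - xs‖ ^ 2 ≤ (α - μ) / (α + μ - γ) * ‖y - xs‖ ^ 2
      + 1 / (γ * (α + μ - γ)) * δ ^ 2 := by
  have hα : 0 < α := lt_of_lt_of_le hμ (le_trans hμL hLα)
  have hαμγ : 0 < α + μ - γ := by linarith
  have hvi := proj_vi hX hpX hproj hxsX
  have hvi' : ⟪y - p, xs - p⟫ - 1 / α * ⟪g, xs - p⟫ ≤ 0 := by
    have e : y - (1 / α) • g - p = (y - p) - (1 / α) • g := by abel
    rw [e, inner_sub_left, real_inner_smul_left] at hvi
    linarith
  have hvi2 : α * ⟪y - p, xs - p⟫ ≤ ⟪g, xs - p⟫ := by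
    have h1 := mul_le_mul_of_nonneg_left hvi' hα.le
    rw [mul_zero, mul_sub, ← mul_assoc, mul_one_div, div_self (ne_of_gt hα), one_mul] at h1
    linarith
  have hA1 : ⟪g, xs - p⟫ = ⟪gh y, xs - p⟫ + ⟪g - gh y, xs - p⟫ := by
    rw [← inner_add_left]; congr 1; abel
  have hA2 : ⟪g - gh y, xs - p⟫ ≤ δ * ‖p - xs‖ := by
    rw [← norm_sub_rev xs p]
    calc ⟪g - gh y, xs - p⟫ ≤ ‖g - gh y‖ * ‖xs - p‖ := real_inner_le_norm _ _
      _ ≤ δ * ‖xs - p‖ := mul_le_mul_of_nonneg_right hg (norm_nonneg _)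
  have hA3 : ⟪gh y, xs - y⟫ ≤ h xs - h y - μ / 2 * ‖y - xs‖ ^ 2 := by
    have := hsc y hyX xs hxsX; rw [norm_sub_rev xs y] at this; linarith
  have hA4 : -⟪gh y, p - y⟫ ≤ h y - h p + L / 2 * ‖y - p‖ ^ 2 := by
    have := hsm y hyX p hpX; rw [norm_sub_rev p y] at this; linarith
  have hsplit : ⟪gh y, xs - p⟫ = ⟪gh y, xs - y⟫ - ⟪gh y, p - y⟫ := by
    rw [← inner_sub_right]; congr 1; abel
  have hA5 : h xs - h p ≤ -(μ / 2) * ‖p - xs‖ ^ 2 := by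
    have h1 := hsc xs hxsX p hpX
    have h2 := min_vi hX hxsX hpX (by linarith : (0:ℝ) ≤ L) hsm hmin
    rw [norm_sub_rev p xs] at *
    linarith
  have hamgm : δ * ‖p - xs‖ ≤ γ / 2 * ‖p - xs‖ ^ 2 + 1 / (2 * γ) * δ ^ 2 := by
    have h0 := sq_nonneg (γ * ‖p - xs‖ - δ)
    have h1 : 2 * γ * (δ * ‖p - xs‖) ≤ γ ^ 2 * ‖p - xs‖ ^ 2 + δ ^ 2 := by nlinarith
    have e : γ / 2 * ‖p - xs‖ ^ 2 + 1 / (2 * γ) * δ ^ 2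
        = (γ ^ 2 * ‖p - xs‖ ^ 2 + δ ^ 2) / (2 * γ) := by field_simp
    rw [e, le_div_iff₀ (by linarith : (0:ℝ) < 2 * γ)]
    linarith
  have hIG : ⟪g, xs - p⟫ ≤ h xs - h p - μ / 2 * ‖y - xs‖ ^ 2 + L / 2 * ‖y - p‖ ^ 2
      + γ / 2 * ‖p - xs‖ ^ 2 + 1 / (2 * γ) * δ ^ 2 := by
    linarith [hA1, hA2, hA3, hA4, hsplit, hamgm]
  have hαpol : α * ⟪y - p, xs - p⟫
      = α / 2 * ‖y - p‖ ^ 2 + α / 2 * ‖p - xs‖ ^ 2 - α / 2 * ‖y - xs‖ ^ 2 := by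
    have e : (y - p) - (xs - p) = y - xs := by abel
    have hpol := norm_sub_sq_real (y - p) (xs - p)
    rw [e, norm_sub_rev xs p] at hpol
    linear_combination (α / 2) * hpol
  have hLW : L / 2 * ‖y - p‖ ^ 2 ≤ α / 2 * ‖y - p‖ ^ 2 := by
    have := mul_le_mul_of_nonneg_right hLα (sq_nonneg ‖y - p‖); linarith
  have key : (α + μ - γ) * ‖p - xs‖ ^ 2 ≤ (α - μ) * ‖y - xs‖ ^ 2 + 1 / γ * δ ^ 2 := by
    have e2γ : 1 / (2 * γ) * δ ^ 2 + 1 / (2 * γ) * δ ^ 2 = 1 / γ * δ ^ 2 := by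
      field_simp; ring
    linarith [hvi2, hIG, hαpol, hLW, hA5]
  have e : (α - μ) / (α + μ - γ) * ‖y - xs‖ ^ 2 + 1 / (γ * (α + μ - γ)) * δ ^ 2
      = ((α - μ) * ‖y - xs‖ ^ 2 + 1 / γ * δ ^ 2) / (α + μ - γ) := by
    field_simp
  rw [e, le_div_iff₀ hαμγ]
  linarith [key]

private lemma chain_bound (J : ℕ) (a : ℕ → ℝ) {e c : ℝ}
    (he0 : 0 ≤ e) (he1 : e < 1)
    (hstep : ∀ j, 1 ≤ j → j ≤ J → a j ≤ e * a (j - 1) + c) :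
    a J ≤ e ^ J * a 0 + c * (1 - e ^ J) / (1 - e) := by
  have h1e : (0:ℝ) < 1 - e := by linarith
  suffices h : ∀ j, j ≤ J → a j ≤ e ^ j * a 0 + c * (1 - e ^ j) / (1 - e) from h J le_rfl
  intro j
  induction j with
  | zero => intro _; simp
  | succ n ih =>
    intro hn
    have h1 := hstep (n + 1) (by omega) hn
    have h2 := ih (by omega)
    simp only [Nat.add_sub_cancel] at h1
    have h3 : e * a n ≤ e * (e ^ n * a 0 + c * (1 - e ^ n) / (1 - e)) :=
      mul_le_mul_of_nonneg_left h2 he0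
    have h4 : e * (e ^ n * a 0 + c * (1 - e ^ n) / (1 - e)) + c
        = e ^ (n + 1) * a 0 + c * (1 - e ^ (n + 1)) / (1 - e) := by
      rw [pow_succ]
      field_simp
      ring
    linarith

private lemma sq_dist_tri {E : Type*} [NormedAddCommGroup E] (a b c : E) :
    ‖a - c‖ ^ 2 ≤ 2 * ‖a - b‖ ^ 2 + 2 * ‖b - c‖ ^ 2 := by
  have h1 : ‖a - c‖ ≤ ‖a - b‖ + ‖b - c‖ := norm_sub_le_norm_sub_add_norm_sub a b c
  nlinarith [norm_nonneg (a - c), norm_nonneg (a - b), norm_nonneg (b - c),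
    sq_nonneg (‖a - b‖ - ‖b - c‖)]

private lemma telescope_norm {E : Type*} [NormedAddCommGroup E] (v : ℕ → E) :
    ∀ n m : ℕ, m ≤ n → ‖v n - v m‖ ≤ ∑ s ∈ Finset.Icc (m + 1) n, ‖v s - v (s - 1)‖ := by
  intro n
  induction n with
  | zero => intro m hm; interval_cases m; simp
  | succ n ih =>
    intro m hm
    rcases Nat.lt_or_ge m (n + 1) with h | h
    · have hmn : m ≤ n := by omega
      have h1 : ‖v (n + 1) - v m‖ ≤ ‖v (n + 1) - v n‖ + ‖v n - v m‖ :=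
        norm_sub_le_norm_sub_add_norm_sub _ _ _
      have h2 := ih m hmn
      have h3 : ∑ s ∈ Finset.Icc (m + 1) (n + 1), ‖v s - v (s - 1)‖
          = (∑ s ∈ Finset.Icc (m + 1) n, ‖v s - v (s - 1)‖) + ‖v (n + 1) - v n‖ := by
        rw [Finset.sum_Icc_succ_top (by omega : m + 1 ≤ n + 1)]
        simp
      rw [h3]; linarith
    · have : m = n + 1 := by omega
      subst this; simp

private lemma path_sq {E : Type*} [NormedAddCommGroup E] (v : ℕ → E) (m n : ℕ) (hmn : m ≤ n) :
    ‖v n - v m‖ ^ 2 ≤ ((n - m : ℕ) : ℝ) * ∑ s ∈ Finset.Icc (m + 1) n, ‖v s - v (s - 1)‖ ^ 2 := by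
  have h1 := telescope_norm v n m hmn
  have h2 : ‖v n - v m‖ ^ 2 ≤ (∑ s ∈ Finset.Icc (m + 1) n, ‖v s - v (s - 1)‖) ^ 2 := by
    have := norm_nonneg (v n - v m)
    nlinarith [Finset.sum_nonneg (fun s _ => norm_nonneg (v s - v (s - 1)) :
      ∀ s ∈ Finset.Icc (m + 1) n, (0:ℝ) ≤ ‖v s - v (s - 1)‖)]
  have h3 := sq_sum_le_card_mul_sum_sq (s := Finset.Icc (m + 1) n)
    (f := fun s => ‖v s - v (s - 1)‖)
  have hcard : (Finset.Icc (m + 1) n).card = n - m := by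
    rw [Nat.card_Icc]; omega
  rw [hcard] at h3
  linarith

private lemma sum_shift (c a b : ℕ) (g : ℕ → ℝ) :
    ∑ t ∈ Finset.Icc (c + a) (c + b), g (t - c) = ∑ s ∈ Finset.Icc a b, g s := by
  rw [← Finset.map_add_left_Icc, Finset.sum_map]
  refine Finset.sum_congr rfl fun s _ => ?_
  simp [addLeftEmbedding]

set_option maxHeartbeats 2000000 in
/-- Theorem 2(ii) of the paper: squared-variation dynamic regret bound for
HiOCO with non-zero local delay `τ_l ≥ 1`, remote delay `τ_r ≥ 1`, and total
delay `τ = τ_l + τ_r`. With `η = (α − μ)/(α + μ − γ)` and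
`β = 1/(γ(α + μ − γ))`, if `4η^{J_l+J_r} < 1` then for any `ξ > 0`,
`Σ_{t=1}^{T} (f_t(x_t) − f_t(x_t*)) ≤ (1/(2ξ)) Σ_t ‖∇f_t(x_t*)‖²
  + ((L+ξ)/2)τR² + ((L+ξ)/(2(1 − 4η^{J_l+J_r})))(τR² + 6τ²Π₂* + (4β/(1−η))Δ₂)`. -/
theorem stmt_15
    {E : Type*} [NormedAddCommGroup E] [InnerProductSpace ℝ E] [FiniteDimensional ℝ E]
    (X : Set E) (hXne : X.Nonempty) (hXcp : IsCompact X) (hXconv : Convex ℝ X)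
    (R : ℝ) (hR : ∀ a ∈ X, ∀ b ∈ X, ‖a - b‖ ≤ R)
    (T τl τr Jr Jl : ℕ) (hT : 1 ≤ T) (hτl : 1 ≤ τl) (hτr : 1 ≤ τr)
    (hτT : τl + τr < T) (hJ : 1 ≤ Jr + Jl)
    (μ L α γ : ℝ) (hμ : 0 < μ) (hμL : μ ≤ L) (hLα : L ≤ α)
    (hγ0 : 0 < γ) (hγ : γ < 2 * μ)
    (f : ℕ → E → ℝ) (hdiff : ∀ t, 1 ≤ t → t ≤ T → Differentiable ℝ (f t))
    (hsc : ∀ t, 1 ≤ t → t ≤ T → ∀ a ∈ X, ∀ b ∈ X,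
      f t a + ⟪gradient (f t) a, b - a⟫ + μ / 2 * ‖b - a‖ ^ 2 ≤ f t b)
    (hsm : ∀ t, 1 ≤ t → t ≤ T → ∀ a ∈ X, ∀ b ∈ X,
      f t b ≤ f t a + ⟪gradient (f t) a, b - a⟫ + L / 2 * ‖b - a‖ ^ 2)
    (D : ℝ) (hD : ∀ t, 1 ≤ t → t ≤ T → ∀ x ∈ X, ‖gradient (f t) x‖ ≤ D)
    (xstar : ℕ → E) (hxsX : ∀ t, 1 ≤ t → t ≤ T → xstar t ∈ X)
    (hxsmin : ∀ t, 1 ≤ t → t ≤ T → ∀ x ∈ X, f t (xstar t) ≤ f t x)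
    (δ : ℕ → ℝ) (hδ : ∀ t, 1 ≤ t → t ≤ T → 0 ≤ δ t)
    (x : ℕ → E) (hxX : ∀ t, 1 ≤ t → t ≤ T → x t ∈ X)
    (hiter : ∀ t, τl + τr < t → t ≤ T → ∃ y z : ℕ → E,
      y 0 = x (t - (τl + τr)) ∧
      (∀ j, 1 ≤ j → j ≤ Jr → ∃ g : E,
        ‖g - gradient (f (t - (τl + τr))) (y (j - 1))‖ ≤ δ (t - (τl + τr)) ∧ y j ∈ X ∧
        ∀ v ∈ X, ‖(y (j - 1) - (1 / α) • g) - y j‖ ≤ ‖(y (j - 1) - (1 / α) • g) - v‖) ∧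
      z 0 = y Jr ∧
      (∀ j, 1 ≤ j → j ≤ Jl → ∃ g : E,
        ‖g - gradient (f (t - τl)) (z (j - 1))‖ ≤ δ (t - τl) ∧ z j ∈ X ∧
        ∀ v ∈ X, ‖(z (j - 1) - (1 / α) • g) - z j‖ ≤ ‖(z (j - 1) - (1 / α) • g) - v‖) ∧
      x t = z Jl)
    (hη : 4 * ((α - μ) / (α + μ - γ)) ^ (Jl + Jr) < 1)
    (ξ : ℝ) (hξ : 0 < ξ) :
    ∑ t ∈ Finset.Icc 1 T, (f t (x t) - f t (xstar t))
      ≤ 1 / (2 * ξ) * ∑ t ∈ Finset.Icc 1 T, ‖gradient (f t) (xstar t)‖ ^ 2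
        + (L + ξ) / 2 * ((τl + τr : ℕ) : ℝ) * R ^ 2
        + (L + ξ) / (2 * (1 - 4 * ((α - μ) / (α + μ - γ)) ^ (Jl + Jr)))
          * (((τl + τr : ℕ) : ℝ) * R ^ 2
            + 6 * ((τl + τr : ℕ) : ℝ) ^ 2
              * ∑ t ∈ Finset.Icc 2 T, ‖xstar t - xstar (t - 1)‖ ^ 2
            + 4 * (1 / (γ * (α + μ - γ))) / (1 - (α - μ) / (α + μ - γ))
              * ∑ t ∈ Finset.Icc 1 T, (δ t) ^ 2) := by
  have hα : 0 < α := lt_of_lt_of_le hμ (le_trans hμL hLα)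
  have hαμγ : 0 < α + μ - γ := by nlinarith
  obtain ⟨τ, hτdef⟩ : ∃ n, n = τl + τr := ⟨_, rfl⟩
  rw [← hτdef] at hτT hiter ⊢
  obtain ⟨η, hηdef⟩ : ∃ r : ℝ, r = (α - μ) / (α + μ - γ) := ⟨_, rfl⟩
  obtain ⟨β, hβdef⟩ : ∃ r : ℝ, r = 1 / (γ * (α + μ - γ)) := ⟨_, rfl⟩
  rw [← hηdef] at hη ⊢
  rw [← hβdef]
  have hη0 : 0 ≤ η := hηdef ▸ div_nonneg (by linarith) hαμγ.le
  have hη1 : η < 1 := by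
    rw [hηdef, div_lt_one hαμγ]; linarith
  have h1η : (0:ℝ) < 1 - η := by linarith
  have hβ0 : 0 < β := by rw [hβdef]; positivity
  obtain ⟨B, hBdef⟩ : ∃ r : ℝ, r = β / (1 - η) := ⟨_, rfl⟩
  have hB0 : 0 ≤ B := by rw [hBdef]; positivity
  have hq0 : (0:ℝ) ≤ 4 * η ^ (Jl + Jr) := by positivity
  have hq1 : (0:ℝ) < 1 - 4 * η ^ (Jl + Jr) := by linarith
  have hτ1 : 1 ≤ τ := by omega
  have hτT' : τ < T := hτT
  have hR0 : 0 ≤ R := by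
    obtain ⟨a, ha⟩ := hXne
    exact le_trans (norm_nonneg _) (hR a ha a ha)
  -- squared distance to the per-round minimizer
  have hu_nonneg : ∀ t, (0:ℝ) ≤ ‖x t - xstar t‖ ^ 2 := fun t => sq_nonneg _
  have hu_R : ∀ t, 1 ≤ t → t ≤ T → ‖x t - xstar t‖ ^ 2 ≤ R ^ 2 := by
    intro t h1 h2
    have := hR (x t) (hxX t h1 h2) (xstar t) (hxsX t h1 h2)
    nlinarith [norm_nonneg (x t - xstar t)]
  -- ===== per-round contraction =====
  have key : ∀ t, τ < t → t ≤ T →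
      ‖x t - xstar t‖ ^ 2 ≤ 4 * η ^ (Jl + Jr) * ‖x (t - τ) - xstar (t - τ)‖ ^ 2
        + 4 * η ^ Jl * (1 - η ^ Jr) * B * δ (t - τ) ^ 2
        + 2 * (1 - η ^ Jl) * B * δ (t - τl) ^ 2
        + 6 * (τ : ℝ) * ∑ s ∈ Finset.Icc (t - τ + 1) t, ‖xstar s - xstar (s - 1)‖ ^ 2 := by
    intro t ht1 ht2
    obtain ⟨y, z, hy0, hyst, hz0, hzst, hxt⟩ := hiter t ht1 ht2
    have hta1 : 1 ≤ t - τ := by omega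
    have hta2 : t - τ ≤ T := by omega
    have htb1 : 1 ≤ t - τl := by omega
    have htb2 : t - τl ≤ T := by omega
    have hyX : ∀ j, j ≤ Jr → y j ∈ X := by
      intro j hj
      rcases Nat.eq_zero_or_pos j with h | h
      · subst h; rw [hy0]; exact hxX _ hta1 hta2
      · obtain ⟨g, _, hgX, _⟩ := hyst j h hj; exact hgX
    have hzX : ∀ j, j ≤ Jl → z j ∈ X := by
      intro j hj
      rcases Nat.eq_zero_or_pos j with h | h
      · subst h; rw [hz0]; exact hyX Jr le_rfl
      · obtain ⟨g, _, hgX, _⟩ := hzst j h hj; exact hgX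
    -- master chain
    have hmas : ‖y Jr - xstar (t - τ)‖ ^ 2 ≤ η ^ Jr * ‖y 0 - xstar (t - τ)‖ ^ 2
        + (β * δ (t - τ) ^ 2) * (1 - η ^ Jr) / (1 - η) := by
      refine chain_bound Jr (fun j => ‖y j - xstar (t - τ)‖ ^ 2) hη0 hη1 ?_
      intro j hj1 hj2
      obtain ⟨g, hgδ, hyj, hproj⟩ := hyst j hj1 hj2
      have := step_contract hXconv hμ hμL hLα hγ0 hγ
        (hsc _ hta1 hta2) (hsm _ hta1 hta2)
        (hxsX _ hta1 hta2) (hyX (j - 1) (by omega)) hyj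
        (fun u hu => hxsmin _ hta1 hta2 u hu) hgδ hproj
      rw [← hηdef, ← hβdef] at this
      exact this
    -- worker chain
    have hwork : ‖z Jl - xstar (t - τl)‖ ^ 2 ≤ η ^ Jl * ‖z 0 - xstar (t - τl)‖ ^ 2
        + (β * δ (t - τl) ^ 2) * (1 - η ^ Jl) / (1 - η) := by
      refine chain_bound Jl (fun j => ‖z j - xstar (t - τl)‖ ^ 2) hη0 hη1 ?_
      intro j hj1 hj2
      obtain ⟨g, hgδ, hzj, hproj⟩ := hzst j hj1 hj2
      have := step_contract hXconv hμ hμL hLα hγ0 hγ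
        (hsc _ htb1 htb2) (hsm _ htb1 htb2)
        (hxsX _ htb1 htb2) (hzX (j - 1) (by omega)) hzj
        (fun u hu => hxsmin _ htb1 htb2 u hu) hgδ hproj
      rw [← hηdef, ← hβdef] at this
      exact this
    rw [hy0] at hmas
    have emas : (β * δ (t - τ) ^ 2) * (1 - η ^ Jr) / (1 - η) = (1 - η ^ Jr) * B * δ (t - τ) ^ 2 := by
      rw [hBdef]; field_simp
    have ework : (β * δ (t - τl) ^ 2) * (1 - η ^ Jl) / (1 - η) = (1 - η ^ Jl) * B * δ (t - τl) ^ 2 := by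
      rw [hBdef]; field_simp
    rw [emas] at hmas
    rw [ework] at hwork
    have hb0 : ‖z 0 - xstar (t - τl)‖ ^ 2
        ≤ 2 * ‖y Jr - xstar (t - τ)‖ ^ 2 + 2 * ‖xstar (t - τ) - xstar (t - τl)‖ ^ 2 := by
      rw [hz0]; exact sq_dist_tri _ _ _
    have hut : ‖x t - xstar t‖ ^ 2
        ≤ 2 * ‖z Jl - xstar (t - τl)‖ ^ 2 + 2 * ‖xstar (t - τl) - xstar t‖ ^ 2 := by
      rw [hxt]; exact sq_dist_tri _ _ _
    -- path bounds
    obtain ⟨P, hPdef⟩ : ∃ r : ℝ, r = ∑ s ∈ Finset.Icc (t - τ + 1) t, ‖xstar s - xstar (s - 1)‖ ^ 2 := ⟨_, rfl⟩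
    rw [← hPdef]
    have hPnn : 0 ≤ P := hPdef ▸ Finset.sum_nonneg fun s _ => sq_nonneg _
    have hsubP : ∀ m, t - τ ≤ m → m ≤ t →
        (∑ s ∈ Finset.Icc (m + 1) t, ‖xstar s - xstar (s - 1)‖ ^ 2) ≤ P := by
      intro m h1 h2
      rw [hPdef]
      refine Finset.sum_le_sum_of_subset_of_nonneg ?_ (fun s _ _ => sq_nonneg _)
      exact Finset.Icc_subset_Icc (by omega) le_rfl
    have hP1 : ‖xstar (t - τ) - xstar (t - τl)‖ ^ 2 ≤ (τ : ℝ) * P := by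
      have h1 := path_sq xstar (t - τ) (t - τl) (by omega)
      rw [norm_sub_rev] at h1
      have hcn : t - τl - (t - τ) ≤ τ := by omega
      have hc : ((t - τl - (t - τ) : ℕ) : ℝ) ≤ (τ : ℝ) := Nat.cast_le.mpr hcn
      have h2 : (∑ s ∈ Finset.Icc (t - τ + 1) (t - τl), ‖xstar s - xstar (s - 1)‖ ^ 2)
          ≤ P := by
        rw [hPdef]
        refine Finset.sum_le_sum_of_subset_of_nonneg ?_ (fun s _ _ => sq_nonneg _)
        exact Finset.Icc_subset_Icc le_rfl (by omega)
      have h3 : (0:ℝ) ≤ ∑ s ∈ Finset.Icc (t - τ + 1) (t - τl), ‖xstar s - xstar (s - 1)‖ ^ 2 :=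
        Finset.sum_nonneg fun s _ => sq_nonneg _
      calc ‖xstar (t - τ) - xstar (t - τl)‖ ^ 2
          ≤ ((t - τl - (t - τ) : ℕ) : ℝ)
            * ∑ s ∈ Finset.Icc (t - τ + 1) (t - τl), ‖xstar s - xstar (s - 1)‖ ^ 2 := h1
        _ ≤ (τ : ℝ) * P := by
            exact mul_le_mul hc h2 h3 (by positivity)
    have hP2 : ‖xstar (t - τl) - xstar t‖ ^ 2 ≤ (τ : ℝ) * P := by
      have h1 := path_sq xstar (t - τl) t (by omega)
      rw [norm_sub_rev] at h1
      have hcn : t - (t - τl) ≤ τ := by omega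
      have hc : ((t - (t - τl) : ℕ) : ℝ) ≤ (τ : ℝ) := Nat.cast_le.mpr hcn
      have h2 : (∑ s ∈ Finset.Icc (t - τl + 1) t, ‖xstar s - xstar (s - 1)‖ ^ 2) ≤ P :=
        hsubP (t - τl) (by omega) (by omega)
      have h3 : (0:ℝ) ≤ ∑ s ∈ Finset.Icc (t - τl + 1) t, ‖xstar s - xstar (s - 1)‖ ^ 2 :=
        Finset.sum_nonneg fun s _ => sq_nonneg _
      calc ‖xstar (t - τl) - xstar t‖ ^ 2
          ≤ ((t - (t - τl) : ℕ) : ℝ)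
            * ∑ s ∈ Finset.Icc (t - τl + 1) t, ‖xstar s - xstar (s - 1)‖ ^ 2 := h1
        _ ≤ (τ : ℝ) * P := mul_le_mul hc h2 h3 (by positivity)
    -- assemble
    have m0 : (0:ℝ) ≤ η ^ Jl := pow_nonneg hη0 _
    have m1 : η ^ Jl ≤ 1 := pow_le_one₀ hη0 hη1.le
    have hAnn : (0:ℝ) ≤ ‖xstar (t - τ) - xstar (t - τl)‖ ^ 2 := sq_nonneg _
    have m2 : η ^ Jl * ‖z 0 - xstar (t - τl)‖ ^ 2
        ≤ η ^ Jl * (2 * ‖y Jr - xstar (t - τ)‖ ^ 2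
          + 2 * ‖xstar (t - τ) - xstar (t - τl)‖ ^ 2) :=
      mul_le_mul_of_nonneg_left hb0 m0
    have m3 : η ^ Jl * ‖y Jr - xstar (t - τ)‖ ^ 2
        ≤ η ^ Jl * (η ^ Jr * ‖x (t - τ) - xstar (t - τ)‖ ^ 2
          + (1 - η ^ Jr) * B * δ (t - τ) ^ 2) :=
      mul_le_mul_of_nonneg_left hmas m0
    have m4 : η ^ Jl * ‖xstar (t - τ) - xstar (t - τl)‖ ^ 2 ≤ (τ : ℝ) * P := by
      have h5 : η ^ Jl * ‖xstar (t - τ) - xstar (t - τl)‖ ^ 2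
          ≤ ‖xstar (t - τ) - xstar (t - τl)‖ ^ 2 := by nlinarith
      linarith
    rw [pow_add]
    linarith [hwork, hut, m2, m3, m4, hP2]
  -- ===== summation =====
  obtain ⟨Pi2, hPidef⟩ : ∃ r : ℝ, r = ∑ t ∈ Finset.Icc 2 T, ‖xstar t - xstar (t - 1)‖ ^ 2 :=
    ⟨_, rfl⟩
  obtain ⟨D2, hD2def⟩ : ∃ r : ℝ, r = ∑ t ∈ Finset.Icc 1 T, δ t ^ 2 := ⟨_, rfl⟩
  rw [← hPidef, ← hD2def]
  have hPinn : 0 ≤ Pi2 := hPidef ▸ Finset.sum_nonneg fun s _ => sq_nonneg _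
  have hD2nn : 0 ≤ D2 := hD2def ▸ Finset.sum_nonneg fun s _ => sq_nonneg _
  obtain ⟨S1, hS1def⟩ : ∃ r : ℝ, r = ∑ t ∈ Finset.Icc 1 τ, ‖x t - xstar t‖ ^ 2 := ⟨_, rfl⟩
  obtain ⟨S2, hS2def⟩ : ∃ r : ℝ, r = ∑ t ∈ Finset.Icc (τ + 1) T, ‖x t - xstar t‖ ^ 2 := ⟨_, rfl⟩
  have hS1nn : 0 ≤ S1 := hS1def ▸ Finset.sum_nonneg fun s _ => sq_nonneg _
  have hS2nn : 0 ≤ S2 := hS2def ▸ Finset.sum_nonneg fun s _ => sq_nonneg _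
  have e0 : Finset.Icc 1 T = Finset.Ioc 0 T := by
    ext a; simp only [Finset.mem_Icc, Finset.mem_Ioc]; omega
  have e1 : Finset.Icc 1 τ = Finset.Ioc 0 τ := by
    ext a; simp only [Finset.mem_Icc, Finset.mem_Ioc]; omega
  have e2 : Finset.Icc (τ + 1) T = Finset.Ioc τ T := by
    ext a; simp only [Finset.mem_Icc, Finset.mem_Ioc]; omega
  have hsplitS : ∑ t ∈ Finset.Icc 1 T, ‖x t - xstar t‖ ^ 2 = S1 + S2 := by
    rw [hS1def, hS2def, e0, e1, e2]
    exact (Finset.sum_Ioc_consecutive _ (Nat.zero_le τ) (le_of_lt hτT)).symm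
  have F1 : S1 ≤ (τ : ℝ) * R ^ 2 := by
    rw [hS1def]
    have hb : ∀ t ∈ Finset.Icc 1 τ, ‖x t - xstar t‖ ^ 2 ≤ R ^ 2 := by
      intro t ht
      rw [Finset.mem_Icc] at ht
      exact hu_R t ht.1 (by omega)
    calc ∑ t ∈ Finset.Icc 1 τ, ‖x t - xstar t‖ ^ 2 ≤ (Finset.Icc 1 τ).card • R ^ 2 :=
          Finset.sum_le_card_nsmul _ _ _ hb
      _ = (τ : ℝ) * R ^ 2 := by rw [Nat.card_Icc, Nat.add_sub_cancel, nsmul_eq_mul]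
  have hshift : ∀ g : ℕ → ℝ,
      ∑ t ∈ Finset.Icc (τ + 1) T, g (t - τ) = ∑ s ∈ Finset.Icc 1 (T - τ), g s := by
    intro g
    have h := sum_shift τ 1 (T - τ) g
    rw [show τ + (T - τ) = T from by omega] at h
    exact h
  have hshiftl : ∀ g : ℕ → ℝ,
      ∑ t ∈ Finset.Icc (τ + 1) T, g (t - τl) = ∑ s ∈ Finset.Icc (τr + 1) (T - τl), g s := by
    intro g
    have h := sum_shift τl (τr + 1) (T - τl) g
    rw [show τl + (τr + 1) = τ + 1 from by omega, show τl + (T - τl) = T from by omega] at h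
    exact h
  have F2 : ∑ t ∈ Finset.Icc (τ + 1) T, ‖x (t - τ) - xstar (t - τ)‖ ^ 2 ≤ S1 + S2 := by
    calc ∑ t ∈ Finset.Icc (τ + 1) T, ‖x (t - τ) - xstar (t - τ)‖ ^ 2
        = ∑ s ∈ Finset.Icc 1 (T - τ), ‖x s - xstar s‖ ^ 2 :=
          hshift (fun s => ‖x s - xstar s‖ ^ 2)
      _ ≤ ∑ s ∈ Finset.Icc 1 T, ‖x s - xstar s‖ ^ 2 :=
          Finset.sum_le_sum_of_subset_of_nonneg
            (Finset.Icc_subset_Icc le_rfl (by omega)) (fun _ _ _ => sq_nonneg _)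
      _ = S1 + S2 := hsplitS
  have F3 : ∑ t ∈ Finset.Icc (τ + 1) T, δ (t - τ) ^ 2 ≤ D2 := by
    calc ∑ t ∈ Finset.Icc (τ + 1) T, δ (t - τ) ^ 2
        = ∑ s ∈ Finset.Icc 1 (T - τ), δ s ^ 2 := hshift (fun s => δ s ^ 2)
      _ ≤ ∑ s ∈ Finset.Icc 1 T, δ s ^ 2 :=
          Finset.sum_le_sum_of_subset_of_nonneg
            (Finset.Icc_subset_Icc le_rfl (by omega)) (fun _ _ _ => sq_nonneg _)
      _ = D2 := hD2def.symm
  have F4 : ∑ t ∈ Finset.Icc (τ + 1) T, δ (t - τl) ^ 2 ≤ D2 := by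
    calc ∑ t ∈ Finset.Icc (τ + 1) T, δ (t - τl) ^ 2
        = ∑ s ∈ Finset.Icc (τr + 1) (T - τl), δ s ^ 2 := hshiftl (fun s => δ s ^ 2)
      _ ≤ ∑ s ∈ Finset.Icc 1 T, δ s ^ 2 :=
          Finset.sum_le_sum_of_subset_of_nonneg
            (Finset.Icc_subset_Icc (by omega) (by omega)) (fun _ _ _ => sq_nonneg _)
      _ = D2 := hD2def.symm
  have F5 : ∑ t ∈ Finset.Icc (τ + 1) T,
      (∑ s ∈ Finset.Icc (t - τ + 1) t, ‖xstar s - xstar (s - 1)‖ ^ 2) ≤ (τ : ℝ) * Pi2 := by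
    have step1 : ∀ t ∈ Finset.Icc (τ + 1) T,
        (∑ s ∈ Finset.Icc (t - τ + 1) t, ‖xstar s - xstar (s - 1)‖ ^ 2)
        = ∑ s ∈ Finset.Icc 2 T,
            if s ∈ Finset.Icc (t - τ + 1) t then ‖xstar s - xstar (s - 1)‖ ^ 2 else 0 := by
      intro t ht
      rw [Finset.mem_Icc] at ht
      rw [Finset.sum_ite_mem, Finset.inter_eq_right.mpr]
      intro s hs
      rw [Finset.mem_Icc] at hs ⊢
      omega
    rw [Finset.sum_congr rfl step1, Finset.sum_comm]
    have step2 : ∀ s ∈ Finset.Icc 2 T,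
        (∑ t ∈ Finset.Icc (τ + 1) T,
          if s ∈ Finset.Icc (t - τ + 1) t then ‖xstar s - xstar (s - 1)‖ ^ 2 else 0)
        ≤ (τ : ℝ) * ‖xstar s - xstar (s - 1)‖ ^ 2 := by
      intro s hs
      rw [Finset.mem_Icc] at hs
      rw [← Finset.sum_filter, Finset.sum_const, nsmul_eq_mul]
      have hsub2 : (Finset.Icc (τ + 1) T).filter (fun t => s ∈ Finset.Icc (t - τ + 1) t)
          ⊆ Finset.Icc s (s + τ - 1) := by
        intro t ht
        rw [Finset.mem_filter, Finset.mem_Icc, Finset.mem_Icc] at ht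
        rw [Finset.mem_Icc]
        omega
      have hcard : (((Finset.Icc (τ + 1) T).filter
          (fun t => s ∈ Finset.Icc (t - τ + 1) t)).card : ℝ) ≤ (τ : ℝ) := by
        have h1 : ((Finset.Icc (τ + 1) T).filter
            (fun t => s ∈ Finset.Icc (t - τ + 1) t)).card ≤ τ := by
          calc _ ≤ (Finset.Icc s (s + τ - 1)).card := Finset.card_le_card hsub2
            _ = τ := by rw [Nat.card_Icc]; omega
        exact_mod_cast h1
      exact mul_le_mul_of_nonneg_right hcard (sq_nonneg _)
    calc ∑ s ∈ Finset.Icc 2 T, ∑ t ∈ Finset.Icc (τ + 1) T,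
          (if s ∈ Finset.Icc (t - τ + 1) t then ‖xstar s - xstar (s - 1)‖ ^ 2 else 0)
        ≤ ∑ s ∈ Finset.Icc 2 T, (τ : ℝ) * ‖xstar s - xstar (s - 1)‖ ^ 2 :=
          Finset.sum_le_sum step2
      _ = (τ : ℝ) * Pi2 := by rw [hPidef, Finset.mul_sum]
  -- apply the per-round bound and sum
  have hkeysum : S2 ≤ 4 * η ^ (Jl + Jr)
        * (∑ t ∈ Finset.Icc (τ + 1) T, ‖x (t - τ) - xstar (t - τ)‖ ^ 2)
      + 4 * η ^ Jl * (1 - η ^ Jr) * B * (∑ t ∈ Finset.Icc (τ + 1) T, δ (t - τ) ^ 2)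
      + 2 * (1 - η ^ Jl) * B * (∑ t ∈ Finset.Icc (τ + 1) T, δ (t - τl) ^ 2)
      + 6 * (τ : ℝ) * (∑ t ∈ Finset.Icc (τ + 1) T,
          ∑ s ∈ Finset.Icc (t - τ + 1) t, ‖xstar s - xstar (s - 1)‖ ^ 2) := by
    rw [hS2def, Finset.mul_sum, Finset.mul_sum, Finset.mul_sum, Finset.mul_sum,
      ← Finset.sum_add_distrib, ← Finset.sum_add_distrib, ← Finset.sum_add_distrib]
    refine Finset.sum_le_sum fun t ht => ?_
    rw [Finset.mem_Icc] at ht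
    exact key t (by omega) ht.2
  have hpl1 : η ^ Jl ≤ 1 := pow_le_one₀ hη0 hη1.le
  have hpr1 : η ^ Jr ≤ 1 := pow_le_one₀ hη0 hη1.le
  have hc1nn : (0:ℝ) ≤ 4 * η ^ Jl * (1 - η ^ Jr) * B :=
    mul_nonneg (mul_nonneg (by positivity) (by linarith)) hB0
  have hc2nn : (0:ℝ) ≤ 2 * (1 - η ^ Jl) * B :=
    mul_nonneg (by linarith) hB0
  have hS2b : S2 ≤ 4 * η ^ (Jl + Jr) * (S1 + S2)
      + 4 * η ^ Jl * (1 - η ^ Jr) * B * D2 + 2 * (1 - η ^ Jl) * B * D2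
      + 6 * (τ : ℝ) * ((τ : ℝ) * Pi2) := by
    refine le_trans hkeysum ?_
    exact add_le_add (add_le_add (add_le_add
      (mul_le_mul_of_nonneg_left F2 hq0)
      (mul_le_mul_of_nonneg_left F3 hc1nn))
      (mul_le_mul_of_nonneg_left F4 hc2nn))
      (mul_le_mul_of_nonneg_left F5 (by positivity))
  have hc12 : 4 * η ^ Jl * (1 - η ^ Jr) * B * D2 + 2 * (1 - η ^ Jl) * B * D2
      ≤ 4 * B * D2 := by
    have hBD : (0:ℝ) ≤ B * D2 := mul_nonneg hB0 hD2nn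
    have h1 : η ^ Jl * (B * D2) ≤ B * D2 := by nlinarith
    have h2 : (0:ℝ) ≤ η ^ Jl * η ^ Jr * (B * D2) :=
      mul_nonneg (mul_nonneg (pow_nonneg hη0 _) (pow_nonneg hη0 _)) hBD
    nlinarith
  have hqS1 : 4 * η ^ (Jl + Jr) * S1 ≤ (τ : ℝ) * R ^ 2 := by
    have h1 : (0:ℝ) ≤ (1 - 4 * η ^ (Jl + Jr)) * S1 := mul_nonneg (by linarith) hS1nn
    nlinarith
  have hS2final : S2 * (1 - 4 * η ^ (Jl + Jr))
      ≤ (τ : ℝ) * R ^ 2 + 6 * (τ : ℝ) ^ 2 * Pi2 + 4 * B * D2 := by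
    nlinarith [hS2b, hc12, hqS1]
  have hS2div : S2 ≤ ((τ : ℝ) * R ^ 2 + 6 * (τ : ℝ) ^ 2 * Pi2 + 4 * B * D2)
      / (1 - 4 * η ^ (Jl + Jr)) := by
    rw [le_div_iff₀ hq1]
    exact hS2final
  -- per-round regret bound
  have reg : ∀ t ∈ Finset.Icc 1 T, f t (x t) - f t (xstar t)
      ≤ 1 / (2 * ξ) * ‖gradient (f t) (xstar t)‖ ^ 2
        + (L + ξ) / 2 * ‖x t - xstar t‖ ^ 2 := by
    intro t ht
    rw [Finset.mem_Icc] at ht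
    have hs := hsm t ht.1 ht.2 (xstar t) (hxsX t ht.1 ht.2) (x t) (hxX t ht.1 ht.2)
    have hi : ⟪gradient (f t) (xstar t), x t - xstar t⟫
        ≤ ‖gradient (f t) (xstar t)‖ * ‖x t - xstar t‖ := real_inner_le_norm _ _
    have hyoung : ‖gradient (f t) (xstar t)‖ * ‖x t - xstar t‖
        ≤ 1 / (2 * ξ) * ‖gradient (f t) (xstar t)‖ ^ 2 + ξ / 2 * ‖x t - xstar t‖ ^ 2 := by
      have h2 : 2 * ξ * (‖gradient (f t) (xstar t)‖ * ‖x t - xstar t‖)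
          ≤ ‖gradient (f t) (xstar t)‖ ^ 2 + ξ ^ 2 * ‖x t - xstar t‖ ^ 2 := by
        nlinarith [sq_nonneg (‖gradient (f t) (xstar t)‖ - ξ * ‖x t - xstar t‖)]
      have e : 1 / (2 * ξ) * ‖gradient (f t) (xstar t)‖ ^ 2 + ξ / 2 * ‖x t - xstar t‖ ^ 2
          = (‖gradient (f t) (xstar t)‖ ^ 2 + ξ ^ 2 * ‖x t - xstar t‖ ^ 2) / (2 * ξ) := by
        field_simp
      rw [e, le_div_iff₀ (by linarith)]
      linarith
    linarith
  have total : ∑ t ∈ Finset.Icc 1 T, (f t (x t) - f t (xstar t))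
      ≤ 1 / (2 * ξ) * (∑ t ∈ Finset.Icc 1 T, ‖gradient (f t) (xstar t)‖ ^ 2)
        + (L + ξ) / 2 * (S1 + S2) := by
    calc ∑ t ∈ Finset.Icc 1 T, (f t (x t) - f t (xstar t))
        ≤ ∑ t ∈ Finset.Icc 1 T, (1 / (2 * ξ) * ‖gradient (f t) (xstar t)‖ ^ 2
            + (L + ξ) / 2 * ‖x t - xstar t‖ ^ 2) := Finset.sum_le_sum reg
      _ = _ := by
          rw [Finset.sum_add_distrib, ← Finset.mul_sum, ← Finset.mul_sum, hsplitS]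
  have hLξ : (0:ℝ) < L + ξ := by linarith
  have hfin : (L + ξ) / 2 * (S1 + S2)
      ≤ (L + ξ) / 2 * ((τ : ℝ) * R ^ 2)
        + (L + ξ) / (2 * (1 - 4 * η ^ (Jl + Jr)))
          * ((τ : ℝ) * R ^ 2 + 6 * (τ : ℝ) ^ 2 * Pi2 + 4 * β / (1 - η) * D2) := by
    have hX : S1 + S2 ≤ (τ : ℝ) * R ^ 2
        + ((τ : ℝ) * R ^ 2 + 6 * (τ : ℝ) ^ 2 * Pi2 + 4 * B * D2)
          / (1 - 4 * η ^ (Jl + Jr)) := add_le_add F1 hS2div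
    have h1 := mul_le_mul_of_nonneg_left hX (by positivity : (0:ℝ) ≤ (L + ξ) / 2)
    refine le_trans h1 (le_of_eq ?_)
    rw [hBdef]
    field_simp
  calc ∑ t ∈ Finset.Icc 1 T, (f t (x t) - f t (xstar t))
      ≤ 1 / (2 * ξ) * (∑ t ∈ Finset.Icc 1 T, ‖gradient (f t) (xstar t)‖ ^ 2)
        + (L + ξ) / 2 * (S1 + S2) := total
    _ ≤ 1 / (2 * ξ) * (∑ t ∈ Finset.Icc 1 T, ‖gradient (f t) (xstar t)‖ ^ 2)
        + ((L + ξ) / 2 * ((τ : ℝ) * R ^ 2)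
          + (L + ξ) / (2 * (1 - 4 * η ^ (Jl + Jr)))
            * ((τ : ℝ) * R ^ 2 + 6 * (τ : ℝ) ^ 2 * Pi2 + 4 * β / (1 - η) * D2)) :=
        add_le_add le_rfl hfin
    _ = _ := by ring
end
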